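/- arXiv:1610.04472 — 2 statements merged into one kernel-verified Lean document; each statement's English description precedes it below -/
import Mathlib

section
/- Let ζ ≠ 0 and G₀ analytic on |τ| ≤ r with r > |√ζ|. Then (1/(2πi))∮_{|τ|=r} G₀(τ)·(−(τ²+ζ)/(τ²−ζ)³) dτ = (G₀''(−√ζ) − G₀''(√ζ))/(8ζ^{1/2}) + (G₀'(√ζ) + G₀'(−√ζ))/(8ζ) − a₀,₁/(4ζ), where a₀,₁ = (G₀(√ζ) − G₀(−√ζ))/(2√ζ). -/
open Real Complex Metric Topology

private lemma deriv_dslope_eq {f : ℂ → ℂ} {a : ℂ} (hf : AnalyticAt ℂ f a) :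
    deriv (dslope f a) a = deriv (deriv f) a / 2 := by
  obtain ⟨p, hp⟩ := hf
  have h1 : deriv (dslope f a) a = p.coeff 2 := by
    exact hp.has_fpower_series_dslope_fslope.deriv.trans
      FormalMultilinearSeries.coeff_fslope
  have h2 : deriv (deriv f) a = 2 * p.coeff 2 := by
    obtain ⟨R, hR⟩ := hp
    have h := hR.factorial_smul (1 : ℂ) 2
    rw [← iteratedDeriv_eq_iteratedFDeriv, iteratedDeriv_succ, iteratedDeriv_one] at h
    have : p 2 (fun _ => (1 : ℂ)) = p.coeff 2 := rfl
    rw [this] at h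
    rw [← h]
    simp [Nat.factorial]
  rw [h1, h2]; ring

private lemma circleIntegral_add {f g : ℂ → ℂ} {c : ℂ} {R : ℝ} (hf : CircleIntegrable f c R)
    (hg : CircleIntegrable g c R) :
    (∮ z in C(c, R), f z + g z) = (∮ z in C(c, R), f z) + ∮ z in C(c, R), g z := by
  simp only [circleIntegral, smul_add, intervalIntegral.integral_add hf.out hg.out]

private lemma cauchy_pole3 {f : ℂ → ℂ} {r : ℝ} {a : ℂ} (ha : a ∈ ball (0 : ℂ) r)
    (hf : DifferentiableOn ℂ f (closedBall (0 : ℂ) r)) (c₁ c₂ c₃ : ℂ) :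
    (∮ z in C(0, r), f z * (c₁ * (z - a)⁻¹ + c₂ * ((z - a) ^ 2)⁻¹ + c₃ * ((z - a) ^ 3)⁻¹)) =
      (2 * ↑π * I) * (c₁ * f a + c₂ * deriv f a + c₃ * (deriv (deriv f) a / 2)) := by
  have hr0 : 0 < r := lt_of_le_of_lt dist_nonneg (mem_ball.mp ha)
  have hmem : closedBall (0 : ℂ) r ∈ 𝓝 a := closedBall_mem_nhds_of_mem ha
  have hg : DifferentiableOn ℂ (dslope f a) (closedBall (0 : ℂ) r) :=
    (differentiableOn_dslope hmem).mpr hf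
  have hh : DifferentiableOn ℂ (dslope (dslope f a) a) (closedBall (0 : ℂ) r) :=
    (differentiableOn_dslope hmem).mpr hg
  set F : ℂ → ℂ := fun z => c₁ * f z + c₂ * dslope f a z + c₃ * dslope (dslope f a) a z with hF
  have hFd : DifferentiableOn ℂ F (closedBall (0 : ℂ) r) := by
    exact ((hf.const_mul c₁).add (hg.const_mul c₂)).add (hh.const_mul c₃)
  have hne : ∀ z ∈ sphere (0 : ℂ) r, z ≠ a := by
    intro z hz h
    subst h
    rw [mem_sphere_iff_norm, sub_zero] at hz
    rw [mem_ball, dist_zero_right, hz] at ha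
    exact lt_irrefl r ha
  have hEq : Set.EqOn
      (fun z => f z * (c₁ * (z - a)⁻¹ + c₂ * ((z - a) ^ 2)⁻¹ + c₃ * ((z - a) ^ 3)⁻¹))
      (fun z => (z - a)⁻¹ * F z + (c₂ * f a + c₃ * deriv f a) * (z - a) ^ (-2 : ℤ)
        + (c₃ * f a) * (z - a) ^ (-3 : ℤ)) (sphere (0 : ℂ) r) := by
    intro z hz
    have hza : z - a ≠ 0 := sub_ne_zero.mpr (hne z hz)
    have e2 : (z - a) ^ (-2 : ℤ) = ((z - a) ^ 2)⁻¹ := by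
      rw [zpow_neg]; norm_cast
    have e3 : (z - a) ^ (-3 : ℤ) = ((z - a) ^ 3)⁻¹ := by
      rw [zpow_neg]; norm_cast
    have hg1 : f z = f a + (z - a) * dslope f a z := by
      have h := sub_smul_dslope f a z
      rw [smul_eq_mul] at h
      linear_combination -h
    have hg2 : dslope f a z = deriv f a + (z - a) * dslope (dslope f a) a z := by
      have h := sub_smul_dslope (dslope f a) a z
      rw [smul_eq_mul, dslope_same] at h
      linear_combination -h
    simp only [hF, e2, e3]
    rw [hg1, hg2]
    field_simp
    ring
  rw [circleIntegral.integral_congr hr0.le hEq]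
  have hint1 : CircleIntegrable (fun z => (z - a)⁻¹ * F z) 0 r := by
    apply ContinuousOn.circleIntegrable hr0.le
    exact (((continuousOn_id.sub continuousOn_const)).inv₀
      (fun z hz => sub_ne_zero.mpr (hne z hz))).mul
      (hFd.continuousOn.mono sphere_subset_closedBall)
  have hint2 : CircleIntegrable
      (fun z => (c₂ * f a + c₃ * deriv f a) * (z - a) ^ (-2 : ℤ)) 0 r := by
    apply ContinuousOn.circleIntegrable hr0.le
    apply continuousOn_const.mul
    apply ContinuousOn.zpow₀ (continuousOn_id.sub continuousOn_const)
    exact fun z hz => Or.inl (sub_ne_zero.mpr (hne z hz))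
  have hint3 : CircleIntegrable (fun z => (c₃ * f a) * (z - a) ^ (-3 : ℤ)) 0 r := by
    apply ContinuousOn.circleIntegrable hr0.le
    apply continuousOn_const.mul
    apply ContinuousOn.zpow₀ (continuousOn_id.sub continuousOn_const)
    exact fun z hz => Or.inl (sub_ne_zero.mpr (hne z hz))
  have hint12 : CircleIntegrable (fun z => (z - a)⁻¹ * F z
      + (c₂ * f a + c₃ * deriv f a) * (z - a) ^ (-2 : ℤ)) 0 r := hint1.add hint2
  rw [circleIntegral_add hint12 hint3,
    circleIntegral_add hint1 hint2,
    circleIntegral.integral_const_mul, circleIntegral.integral_const_mul,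
    circleIntegral.integral_sub_zpow_of_ne (by decide) _ _ _,
    circleIntegral.integral_sub_zpow_of_ne (by decide) _ _ _]
  have := hFd.circleIntegral_sub_inv_smul ha
  simp only [smul_eq_mul] at this
  rw [this]
  have hFa : F a = c₁ * f a + c₂ * deriv f a + c₃ * (deriv (deriv f) a / 2) := by
    rw [hF]
    simp only [dslope_same]
    rw [deriv_dslope_eq (hf.analyticAt hmem)]
  rw [hFa]
  ring

private lemma frac_decomp (z w G : ℂ) (h₁ : z - w ≠ 0) (h₂ : z + w ≠ 0) (hw0 : w ≠ 0) :
    G * (-(z ^ 2 + w ^ 2) / ((z - w) * (z + w)) ^ 3) =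
      G * ((-1 / (8 * w ^ 3)) * (z - w)⁻¹ + (1 / (8 * w ^ 2)) * ((z - w) ^ 2)⁻¹ +
        (-1 / (4 * w)) * ((z - w) ^ 3)⁻¹) +
      G * ((1 / (8 * w ^ 3)) * (z + w)⁻¹ + (1 / (8 * w ^ 2)) * ((z + w) ^ 2)⁻¹ +
        (1 / (4 * w)) * ((z + w) ^ 3)⁻¹) := by
  have hw3 : (8 : ℂ) * w ^ 3 ≠ 0 := by simp [hw0]
  apply mul_left_cancel₀ hw3
  have k1 : 8 * w ^ 3 * (-1 / (8 * w ^ 3)) = -1 := by field_simp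
  have k2 : 8 * w ^ 3 * (1 / (8 * w ^ 2)) = w := by field_simp
  have k3 : 8 * w ^ 3 * (-1 / (4 * w)) = -2 * w ^ 2 := by field_simp; ring
  have e1 : 8 * w ^ 3 * (G * ((-1 / (8 * w ^ 3)) * (z - w)⁻¹ + (1 / (8 * w ^ 2)) * ((z - w) ^ 2)⁻¹ +
        (-1 / (4 * w)) * ((z - w) ^ 3)⁻¹)) =
      G * ((-1) * (z - w)⁻¹ + w * ((z - w) ^ 2)⁻¹ + (-2 * w ^ 2) * ((z - w) ^ 3)⁻¹) := by
    linear_combination (G * (z - w)⁻¹) * k1 + (G * ((z - w) ^ 2)⁻¹) * k2 +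
      (G * ((z - w) ^ 3)⁻¹) * k3
  have k1' : 8 * w ^ 3 * (1 / (8 * w ^ 3)) = 1 := by field_simp
  have k3' : 8 * w ^ 3 * (1 / (4 * w)) = 2 * w ^ 2 := by field_simp; ring
  have e2 : 8 * w ^ 3 * (G * ((1 / (8 * w ^ 3)) * (z + w)⁻¹ + (1 / (8 * w ^ 2)) * ((z + w) ^ 2)⁻¹ +
        (1 / (4 * w)) * ((z + w) ^ 3)⁻¹)) =
      G * (1 * (z + w)⁻¹ + w * ((z + w) ^ 2)⁻¹ + (2 * w ^ 2) * ((z + w) ^ 3)⁻¹) := by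
    linear_combination (G * (z + w)⁻¹) * k1' + (G * ((z + w) ^ 2)⁻¹) * k2 +
      (G * ((z + w) ^ 3)⁻¹) * k3'
  have e3 : 8 * w ^ 3 * (G * (-(z ^ 2 + w ^ 2) / ((z - w) * (z + w)) ^ 3)) =
      G * ((-1) * (z - w)⁻¹ + w * ((z - w) ^ 2)⁻¹ + (-2 * w ^ 2) * ((z - w) ^ 3)⁻¹) +
      G * (1 * (z + w)⁻¹ + w * ((z + w) ^ 2)⁻¹ + (2 * w ^ 2) * ((z + w) ^ 3)⁻¹) := by
    simp only [div_eq_mul_inv, mul_pow, mul_inv, ← inv_pow]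
    have hx : (z - w) * (z - w)⁻¹ = 1 := mul_inv_cancel₀ h₁
    have hy : (z + w) * (z + w)⁻¹ = 1 := mul_inv_cancel₀ h₂
    linear_combination
      (-(G * (z - w)⁻¹ * ((z - w)⁻¹ * (z - w) + 1)) + G * w * ((z - w)⁻¹) ^ 2 +
        G * ((z + w)⁻¹) ^ 3 * ((z + w) ^ 2 + w * (z + w) + 2 * w ^ 2) *
          (((z - w)⁻¹) ^ 2 * (z - w) ^ 2 + (z - w)⁻¹ * (z - w) + 1)) * hx +
      (G * (z + w)⁻¹ * ((z + w)⁻¹ * (z + w) + 1) + G * w * ((z + w)⁻¹) ^ 2 +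
        G * ((z - w)⁻¹) ^ 3 * (-(z - w) ^ 2 + w * (z - w) - 2 * w ^ 2) *
          (((z + w)⁻¹) ^ 2 * (z + w) ^ 2 + (z + w)⁻¹ * (z + w) + 1)) * hy
  linear_combination e3 - e1 - e2

/-- Residue evaluation of the kernel `A₁,₀(τ) = −(τ²+ζ)/(τ²−ζ)³` against an analytic
function `G₀`, giving the explicit (numerically unstable) representation of the
coefficient `a₁,₀` in the Airy-type uniform asymptotic expansion. -/
theorem second_coefficient_residue_formula (ζ w : ℂ) (r : ℝ) (G₀ : ℂ → ℂ)
    (hζ : ζ ≠ 0) (hw : w ^ 2 = ζ) (hr : ‖w‖ < r)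
    (hG : DifferentiableOn ℂ G₀ (closedBall (0 : ℂ) r)) :
    (2 * π * Complex.I)⁻¹ *
        (∮ τ in C(0, r), G₀ τ * (-(τ ^ 2 + ζ) / (τ ^ 2 - ζ) ^ 3)) =
      (deriv (deriv G₀) (-w) - deriv (deriv G₀) w) / (8 * w) +
        (deriv G₀ w + deriv G₀ (-w)) / (8 * ζ) -
        ((G₀ w - G₀ (-w)) / (2 * w)) / (4 * ζ) := by
  subst hw
  have hw0 : w ≠ 0 := by
    intro h; apply hζ; rw [h]; ring
  have hr0 : 0 < r := lt_of_le_of_lt (norm_nonneg w) hr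
  have haw : w ∈ ball (0 : ℂ) r := by
    rw [mem_ball, dist_zero_right]; exact hr
  have haw' : -w ∈ ball (0 : ℂ) r := by
    rw [mem_ball, dist_zero_right, norm_neg]; exact hr
  have hne : ∀ z ∈ sphere (0 : ℂ) r, z - w ≠ 0 ∧ z + w ≠ 0 := by
    intro z hz
    rw [mem_sphere_iff_norm, sub_zero] at hz
    constructor
    · intro h
      rw [sub_eq_zero] at h
      rw [h] at hz
      exact ne_of_lt hr hz
    · intro h
      have hz' : z = -w := by linear_combination h
      rw [hz', norm_neg] at hz
      exact ne_of_lt hr hz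
  set P₁ : ℂ → ℂ := fun z =>
    G₀ z * ((-1 / (8 * w ^ 3)) * (z - w)⁻¹ + (1 / (8 * w ^ 2)) * ((z - w) ^ 2)⁻¹ +
      (-1 / (4 * w)) * ((z - w) ^ 3)⁻¹) with hP₁
  set P₂ : ℂ → ℂ := fun z =>
    G₀ z * ((1 / (8 * w ^ 3)) * (z - -w)⁻¹ + (1 / (8 * w ^ 2)) * ((z - -w) ^ 2)⁻¹ +
      (1 / (4 * w)) * ((z - -w) ^ 3)⁻¹) with hP₂
  have hEq : Set.EqOn (fun τ => G₀ τ * (-(τ ^ 2 + w ^ 2) / (τ ^ 2 - w ^ 2) ^ 3))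
      (fun z => P₁ z + P₂ z) (sphere (0 : ℂ) r) := by
    intro z hz
    obtain ⟨h₁, h₂⟩ := hne z hz
    have hfac : z ^ 2 - w ^ 2 = (z - w) * (z + w) := by ring
    have hzw : z - -w = z + w := sub_neg_eq_add z w
    simp only [hP₁, hP₂, hfac, hzw]
    exact frac_decomp z w (G₀ z) h₁ h₂ hw0
  have hcont : ContinuousOn G₀ (sphere (0 : ℂ) r) :=
    hG.continuousOn.mono sphere_subset_closedBall
  have hint : ∀ (a : ℂ), (∀ z ∈ sphere (0 : ℂ) r, z - a ≠ 0) → ∀ d₁ d₂ d₃ : ℂ,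
      CircleIntegrable (fun z =>
        G₀ z * (d₁ * (z - a)⁻¹ + d₂ * ((z - a) ^ 2)⁻¹ + d₃ * ((z - a) ^ 3)⁻¹)) 0 r := by
    intro a hna d₁ d₂ d₃
    apply ContinuousOn.circleIntegrable hr0.le
    apply hcont.mul
    have hs : ContinuousOn (fun z : ℂ => z - a) (sphere (0 : ℂ) r) :=
      continuousOn_id.sub continuousOn_const
    exact ((continuousOn_const.mul (hs.inv₀ hna)).add
      (continuousOn_const.mul ((hs.pow 2).inv₀ fun z hz => pow_ne_zero 2 (hna z hz)))).add
      (continuousOn_const.mul ((hs.pow 3).inv₀ fun z hz => pow_ne_zero 3 (hna z hz)))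
  have hint1 : CircleIntegrable P₁ 0 r := hint w (fun z hz => (hne z hz).1) _ _ _
  have hint2 : CircleIntegrable P₂ 0 r := by
    refine hint (-w) (fun z hz => ?_) _ _ _
    rw [sub_neg_eq_add]; exact (hne z hz).2
  rw [circleIntegral.integral_congr hr0.le hEq, circleIntegral_add hint1 hint2,
    hP₁, hP₂, cauchy_pole3 haw hG _ _ _, cauchy_pole3 haw' hG _ _ _]
  have h2pi : (2 * ↑π * I : ℂ) ≠ 0 := Complex.two_pi_I_ne_zero
  rw [← mul_add, ← mul_assoc, inv_mul_cancel₀ h2pi, one_mul]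
  ring
end

section
/- For 0 < θ < π and z = cos θ, the phase f(t) = ln((((1+z)/2) − t)/(1 − t)) − ln t has critical points exactly at t± = (1 + e^{±iθ})/2, and f''(t±) = ±4i·e^{∓iθ}/sin θ. -/
open Real Complex


lemma hasDerivAt_phase (c t : ℂ) (ht1 : (1:ℂ) - t ≠ 0)
    (ht : t ∈ Complex.slitPlane) (hg : (c - t) / (1 - t) ∈ Complex.slitPlane) :
    HasDerivAt (fun t : ℂ => Complex.log ((c - t) / (1 - t)) - Complex.log t)
      ((c - 1) / ((1 - t) * (c - t)) - t⁻¹) t := by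
  have ht0 : t ≠ 0 := Complex.slitPlane_ne_zero ht
  have hct : c - t ≠ 0 := by
    intro h
    rw [h, zero_div] at hg
    exact Complex.zero_notMem_slitPlane hg
  have h1 : HasDerivAt (fun t : ℂ => (c - t) / (1 - t)) ((c - 1) / (1 - t)^2) t := by
    have := ((hasDerivAt_id t).const_sub c).div ((hasDerivAt_id t).const_sub 1) ht1
    refine this.congr_deriv ?_
    simp only [id_eq]
    field_simp
    ring
  have h2 := (h1.clog hg).sub (Complex.hasDerivAt_log ht)
  refine h2.congr_deriv ?_
  field_simp

lemma hasDerivAt_phase' (c t : ℂ) (ht1 : (1:ℂ) - t ≠ 0) (ht0 : t ≠ 0) (hct : c - t ≠ 0) :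
    HasDerivAt (fun t : ℂ => (c - 1) / ((1 - t) * (c - t)) - t⁻¹)
      (-((c - 1) * (2*t - 1 - c)) / ((1 - t) * (c - t))^2 + (t^2)⁻¹) t := by
  have hu : HasDerivAt (fun t : ℂ => (1 - t) * (c - t)) (2*t - 1 - c) t := by
    have := ((hasDerivAt_id t).const_sub 1).mul ((hasDerivAt_id t).const_sub c)
    refine this.congr_deriv ?_
    simp only [id_eq]
    ring
  have h := ((hasDerivAt_const t (c-1)).div hu (mul_ne_zero ht1 hct)).sub (hasDerivAt_inv ht0)
  refine h.congr_deriv ?_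
  ring

example (w : ℂ) : ((1 + w)/2 : ℂ).im = w.im / 2 := by
  simp [Complex.div_im, Complex.normSq]


set_option maxHeartbeats 1000000 in
/-- For `0 < θ < π`, `z = cos θ`, the phase `f(t) = log(((1+z)/2 − t)/(1 − t)) − log t`
has critical points exactly at `t± = (1 + e^{±iθ})/2` (among points where the logarithms
are off their branch cuts), and `f''(t±) = ±4i·e^{∓iθ}/sin θ`. -/
theorem hypergeometric_phase_saddles (θ : ℝ) (hθ0 : 0 < θ) (hθπ : θ < π) :
    (∀ t : ℂ, t ≠ 1 → t ∈ Complex.slitPlane →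
        ((((1 : ℂ) + Real.cos θ) / 2 - t) / (1 - t)) ∈ Complex.slitPlane →
        (deriv (fun t : ℂ =>
            Complex.log ((((1 : ℂ) + Real.cos θ) / 2 - t) / (1 - t)) -
              Complex.log t) t = 0 ↔
          t = (1 + Complex.exp (Complex.I * θ)) / 2 ∨
            t = (1 + Complex.exp (-Complex.I * θ)) / 2)) ∧
    deriv (deriv (fun t : ℂ =>
        Complex.log ((((1 : ℂ) + Real.cos θ) / 2 - t) / (1 - t)) - Complex.log t))
      ((1 + Complex.exp (Complex.I * θ)) / 2) =
        4 * Complex.I * Complex.exp (-Complex.I * θ) / Real.sin θ ∧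
    deriv (deriv (fun t : ℂ =>
        Complex.log ((((1 : ℂ) + Real.cos θ) / 2 - t) / (1 - t)) - Complex.log t))
      ((1 + Complex.exp (-Complex.I * θ)) / 2) =
        -(4 * Complex.I * Complex.exp (Complex.I * θ) / Real.sin θ) := by
  set c : ℂ := ((1 : ℂ) + Real.cos θ) / 2 with hcdef
  set E : ℂ := Complex.exp (Complex.I * θ) with hEdef
  have hE0 : E ≠ 0 := Complex.exp_ne_zero _
  have hE' : Complex.exp (-Complex.I * θ) = E⁻¹ := by
    rw [neg_mul, Complex.exp_neg, hEdef]
  have hsinpos : 0 < Real.sin θ := Real.sin_pos_of_pos_of_lt_pi hθ0 hθπ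
  have him : E.im = Real.sin θ := by
    rw [hEdef, mul_comm]; exact Complex.exp_ofReal_mul_I_im θ
  have him' : (E⁻¹).im = -Real.sin θ := by
    rw [← hE', show -Complex.I * (θ:ℂ) = ((-θ : ℝ) : ℂ) * Complex.I by push_cast; ring,
      Complex.exp_ofReal_mul_I_im, Real.sin_neg]
  have hE1 : E ≠ 1 := by
    intro h
    have := congrArg Complex.im h
    rw [him, Complex.one_im] at this
    linarith
  have hEneg1 : E ≠ -1 := by
    intro h
    have := congrArg Complex.im h
    rw [him] at this
    simp at this
    linarith
  have hcos : ((Real.cos θ : ℝ) : ℂ) = (E + E⁻¹) / 2 := by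
    rw [Complex.ofReal_cos]
    have := Complex.two_cos (θ : ℂ)
    rw [mul_comm (θ:ℂ) Complex.I, ← hEdef, show -(θ:ℂ) * Complex.I = -(Complex.I * θ) by ring,
      Complex.exp_neg, ← hEdef] at this
    linear_combination this / 2
  have hsin : ((Real.sin θ : ℝ) : ℂ) = (E⁻¹ - E) * Complex.I / 2 := by
    rw [Complex.ofReal_sin]
    have := Complex.two_sin (θ : ℂ)
    rw [mul_comm (θ:ℂ) Complex.I, ← hEdef, show -(θ:ℂ) * Complex.I = -(Complex.I * θ) by ring,
      Complex.exp_neg, ← hEdef] at this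
    linear_combination this / 2
  have hsin0 : ((Real.sin θ : ℝ) : ℂ) ≠ 0 := by
    exact_mod_cast hsinpos.ne'
  have hEdiff : E⁻¹ - E ≠ 0 := by
    intro h
    apply hsin0
    rw [hsin, h, zero_mul, zero_div]
  have hcE : c = (2 + E + E⁻¹) / 4 := by
    rw [hcdef, hcos]; ring
  -- nonvanishing at the two saddle points
  have h1tp : (1:ℂ) - (1 + E) / 2 ≠ 0 := by
    intro h; apply hE1; linear_combination -2 * h
  have h1tm : (1:ℂ) - (1 + E⁻¹) / 2 ≠ 0 := by
    intro h
    apply hEdiff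
    have hi : E⁻¹ = 1 := by linear_combination -2 * h
    rw [hi]
    have hi2 : E = 1 := by rw [← inv_inv E, hi, inv_one]
    rw [hi2]; ring
  have htp0 : ((1:ℂ) + E) / 2 ≠ 0 := by
    intro h; apply hEneg1; linear_combination 2 * h
  have htm0 : ((1:ℂ) + E⁻¹) / 2 ≠ 0 := by
    intro h
    apply hEneg1
    have hi : E⁻¹ = -1 := by linear_combination 2 * h
    rw [← inv_inv E, hi]
    norm_num
  have hctp : c - (1 + E) / 2 ≠ 0 := by
    intro h; apply hEdiff; rw [hcE] at h; linear_combination 4 * h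
  have hctm : c - (1 + E⁻¹) / 2 ≠ 0 := by
    intro h; apply hEdiff; rw [hcE] at h; linear_combination -4 * h
  have himhalf : ∀ w : ℂ, ((1 + w)/2 : ℂ).im = w.im / 2 := by
    intro w; simp [Complex.div_im, Complex.normSq]
  have htps : ((1:ℂ) + E) / 2 ∈ Complex.slitPlane := by
    rw [Complex.mem_slitPlane_iff]; right
    rw [himhalf, him]; positivity
  have htms : ((1:ℂ) + E⁻¹) / 2 ∈ Complex.slitPlane := by
    rw [Complex.mem_slitPlane_iff]; right
    rw [himhalf, him']
    intro h; rw [div_eq_zero_iff] at h; simp at h; linarith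
  have hEinv : E * E⁻¹ = 1 := mul_inv_cancel₀ hE0
  have h1E : (1:ℂ) - E ≠ 0 := sub_ne_zero.mpr (Ne.symm hE1)
  have h1pE : (1:ℂ) + E ≠ 0 := fun h => hEneg1 (by linear_combination h)
  have hEi1 : E⁻¹ ≠ 1 := fun h => hE1 (by rw [← inv_inv E, h, inv_one])
  have hEineg1 : E⁻¹ ≠ -1 := fun h => hEneg1 (by rw [← inv_inv E, h]; norm_num)
  have h1Ei : (1:ℂ) - E⁻¹ ≠ 0 := sub_ne_zero.mpr (Ne.symm hEi1)
  have h1pEi : (1:ℂ) + E⁻¹ ≠ 0 := fun h => hEineg1 (by linear_combination h)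
  have hgp : (c - (1 + E) / 2) / (1 - (1 + E) / 2) = (1 + E⁻¹) / 2 := by
    rw [div_eq_iff h1tp, hcE]
    linear_combination (1/4 : ℂ) * hEinv
  have hgm : (c - (1 + E⁻¹) / 2) / (1 - (1 + E⁻¹) / 2) = (1 + E) / 2 := by
    rw [div_eq_iff h1tm, hcE]
    linear_combination (1/4 : ℂ) * hEinv
  have hD2p : (((1:ℂ) + E) / 2)^2 ≠ 0 := pow_ne_zero _ htp0
  have hD2m : (((1:ℂ) + E⁻¹) / 2)^2 ≠ 0 := pow_ne_zero _ htm0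
  have hq : ((1:ℂ) - E) * (1 + E) * E⁻¹ ≠ 0 :=
    mul_ne_zero (mul_ne_zero h1E h1pE) (inv_ne_zero hE0)
  have hD1p : (((1:ℂ) - E) / 2 * ((1 - E) * (1 + E) * E⁻¹ / 4))^2 ≠ 0 :=
    pow_ne_zero _ (mul_ne_zero (div_ne_zero h1E two_ne_zero)
      (div_ne_zero hq (by norm_num)))
  have hD1m : (((1:ℂ) - E⁻¹) / 2 * (-((1 - E) * (1 + E) * E⁻¹) / 4))^2 ≠ 0 :=
    pow_ne_zero _ (mul_ne_zero (div_ne_zero h1Ei two_ne_zero)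
      (div_ne_zero (neg_ne_zero.mpr hq) (by norm_num)))
  have hDr : ((1:ℂ) - E) * (1 + E) * E⁻¹ * Complex.I / 2 ≠ 0 :=
    div_ne_zero (mul_ne_zero hq Complex.I_ne_zero) two_ne_zero
  have hE1' : E - 1 ≠ 0 := sub_ne_zero.mpr hE1
  have hEp1' : E + 1 ≠ 0 := fun h => hEneg1 (by linear_combination h)
  have h2E : (2:ℂ) * E ≠ 0 := mul_ne_zero two_ne_zero hE0
  have h4E : (4:ℂ) * E ≠ 0 := mul_ne_zero (by norm_num) hE0
  have hS : ((1:ℂ) - E) * (1 + E) * Complex.I / (2 * E) ≠ 0 :=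
    div_ne_zero (mul_ne_zero (mul_ne_zero h1E h1pE) Complex.I_ne_zero) h2E
  have hDp : (((1:ℂ) - E) / 2 * ((1 - E) * (1 + E) / (4 * E)))^2 ≠ 0 :=
    pow_ne_zero _ (mul_ne_zero (div_ne_zero h1E two_ne_zero)
      (div_ne_zero (mul_ne_zero h1E h1pE) h4E))
  have hDm : ((E - 1) / (2 * E) * ((E - 1) * (E + 1) / (4 * E)))^2 ≠ 0 :=
    pow_ne_zero _ (mul_ne_zero (div_ne_zero hE1' h2E)
      (div_ne_zero (mul_ne_zero hE1' hEp1') h4E))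
  have hTp : (((1:ℂ) + E) / 2)^2 ≠ 0 := pow_ne_zero _ htp0
  have hTm : (((1:ℂ) + E) / (2 * E))^2 ≠ 0 := pow_ne_zero _ (div_ne_zero h1pE h2E)
  refine ⟨?_, ?_, ?_⟩
  · intro t ht1 ht hg
    have h1t : (1:ℂ) - t ≠ 0 := sub_ne_zero.mpr (Ne.symm ht1)
    have ht0 : t ≠ 0 := Complex.slitPlane_ne_zero ht
    have hct : c - t ≠ 0 := by
      intro h
      rw [h, zero_div] at hg
      exact Complex.zero_notMem_slitPlane hg
    rw [(hasDerivAt_phase c t h1t ht hg).deriv, hE']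
    rw [sub_eq_zero, inv_eq_one_div, div_eq_div_iff (mul_ne_zero h1t hct) ht0]
    have factored : (c - 1) * t - 1 * ((1 - t) * (c - t)) =
        -((t - (1 + E)/2) * (t - (1 + E⁻¹)/2)) := by
      linear_combination (2*t - 1) * hcE + (1/4 : ℂ) * hEinv
    constructor
    · intro h
      have h0 : -((t - (1 + E)/2) * (t - (1 + E⁻¹)/2)) = 0 := by
        rw [← factored]; linear_combination h
      rcases mul_eq_zero.mp (neg_eq_zero.mp h0) with h' | h'
      · exact Or.inl (sub_eq_zero.mp h')
      · exact Or.inr (sub_eq_zero.mp h')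
    · rintro (rfl | rfl) <;> linear_combination factored
  · rw [hE']
    have hev : deriv (fun t : ℂ => Complex.log ((c - t) / (1 - t)) - Complex.log t)
        =ᶠ[nhds ((1 + E) / 2)] fun t : ℂ => (c - 1) / ((1 - t) * (c - t)) - t⁻¹ := by
      have h1 : ∀ᶠ t in nhds ((1 + E) / 2), t ∈ Complex.slitPlane :=
        Complex.isOpen_slitPlane.eventually_mem htps
      have h2 : ∀ᶠ t in nhds ((1 + E) / 2), (1:ℂ) - t ≠ 0 := by
        have hcont : ContinuousAt (fun t : ℂ => 1 - t) ((1 + E) / 2) := by fun_prop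
        exact hcont.eventually_ne h1tp
      have h3 : ∀ᶠ t in nhds ((1 + E) / 2), (c - t) / (1 - t) ∈ Complex.slitPlane := by
        have hcont : ContinuousAt (fun t : ℂ => (c - t) / (1 - t)) ((1 + E) / 2) :=
          ContinuousAt.div (by fun_prop) (by fun_prop) h1tp
        apply hcont.eventually_mem
        rw [hgp]
        exact Complex.isOpen_slitPlane.mem_nhds htms
      filter_upwards [h1, h2, h3] with t ht h1t' hg'
      exact (hasDerivAt_phase c t h1t' ht hg').deriv
    rw [((hasDerivAt_phase' c ((1 + E) / 2) h1tp htp0 hctp).congr_of_eventuallyEq hev).deriv,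
      show (1:ℂ) - (1 + E) / 2 = (1 - E) / 2 by ring,
      show c - (1 + E) / 2 = (1 - E) * (1 + E) / (4 * E) by
        rw [hcE]; linear_combination (E / 4) * hEinv,
      show 2 * ((1 + E) / 2) - 1 - c = (3 * E + 1) * (E - 1) / (4 * E) by
        rw [hcE]; linear_combination ((2 - 3 * E) / 4) * hEinv,
      show c - 1 = (E - 1)^2 / (4 * E) by
        rw [hcE]; linear_combination ((2 - E) / 4) * hEinv,
      hsin, show (E⁻¹ - E) * Complex.I / 2 = (1 - E) * (1 + E) * Complex.I / (2 * E) by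
        linear_combination (E * Complex.I / 2) * hEinv]
    rw [inv_eq_one_div ((((1:ℂ) + E) / 2) ^ 2), div_add_div _ _ hDp hTp,
      div_eq_div_iff (mul_ne_zero hDp hTp) hS]
    have hE5 : E^5 * E⁻¹^5 = 1 := by rw [← mul_pow, hEinv, one_pow]
    field_simp
    ring
  · rw [hE']
    have hev : deriv (fun t : ℂ => Complex.log ((c - t) / (1 - t)) - Complex.log t)
        =ᶠ[nhds ((1 + E⁻¹) / 2)] fun t : ℂ => (c - 1) / ((1 - t) * (c - t)) - t⁻¹ := by
      have h1 : ∀ᶠ t in nhds ((1 + E⁻¹) / 2), t ∈ Complex.slitPlane :=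
        Complex.isOpen_slitPlane.eventually_mem htms
      have h2 : ∀ᶠ t in nhds ((1 + E⁻¹) / 2), (1:ℂ) - t ≠ 0 := by
        have hcont : ContinuousAt (fun t : ℂ => 1 - t) ((1 + E⁻¹) / 2) := by fun_prop
        exact hcont.eventually_ne h1tm
      have h3 : ∀ᶠ t in nhds ((1 + E⁻¹) / 2), (c - t) / (1 - t) ∈ Complex.slitPlane := by
        have hcont : ContinuousAt (fun t : ℂ => (c - t) / (1 - t)) ((1 + E⁻¹) / 2) :=
          ContinuousAt.div (by fun_prop) (by fun_prop) h1tm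
        apply hcont.eventually_mem
        rw [hgm]
        exact Complex.isOpen_slitPlane.mem_nhds htps
      filter_upwards [h1, h2, h3] with t ht h1t' hg'
      exact (hasDerivAt_phase c t h1t' ht hg').deriv
    rw [((hasDerivAt_phase' c ((1 + E⁻¹) / 2) h1tm htm0 hctm).congr_of_eventuallyEq hev).deriv,
      show (1:ℂ) - (1 + E⁻¹) / 2 = (E - 1) / (2 * E) by
        linear_combination (-1/2 : ℂ) * hEinv,
      show c - (1 + E⁻¹) / 2 = (E - 1) * (E + 1) / (4 * E) by
        rw [hcE]; linear_combination (-E / 4) * hEinv,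
      show 2 * ((1 + E⁻¹) / 2) - 1 - c = (3 + E) * (1 - E) / (4 * E) by
        rw [hcE]; linear_combination ((2 + E) / 4) * hEinv,
      show c - 1 = (E - 1)^2 / (4 * E) by
        rw [hcE]; linear_combination ((2 - E) / 4) * hEinv,
      show ((1:ℂ) + E⁻¹) / 2 = (1 + E) / (2 * E) by
        linear_combination (-1/2 : ℂ) * hEinv,
      hsin, show (E⁻¹ - E) * Complex.I / 2 = (1 - E) * (1 + E) * Complex.I / (2 * E) by
        linear_combination (E * Complex.I / 2) * hEinv, ← neg_div]
    rw [inv_eq_one_div ((((1:ℂ) + E) / (2 * E)) ^ 2), div_add_div _ _ hDm hTm,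
      div_eq_div_iff (mul_ne_zero hDm hTm) hS]
    have hE9 : E^9 * E⁻¹^9 = 1 := by rw [← mul_pow, hEinv, one_pow]
    field_simp
    ring
end
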